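/- Let n ≥ 2 and m ≥ 1 with m and n coprime. Let V = {v ∈ ℂⁿ : v₁ + … + vₙ = 0} and let c : V → V be the cyclic shift (c v)_i = v_{i−1 (mod n)}. Let W be the space of functions f : ℤ/mℤ → V and define the linear endomorphism T of W by (T f)(a) = c(f(a+1)). Then Id − T is a bijective linear endomorphism of W. (This is the statement that, on the lattice Γ = ℤ/mℤ with lattice length coprime to the Coxeter number h = n, the operator I − θ with θ = R_s·τ — the Coxeter element acting on the Cartan subalgebra of sl(n) composed with the cyclic shift of the lattice — is invertible, which is the consistency condition for the lattice Drinfeld–Sokolov reduction.) -/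
import Mathlib

open Finset

/-- The natural map `Fin n → ZMod n` is bijective. -/
lemma finToZMod_bij (n : ℕ) [NeZero n] :
    Function.Bijective (fun s : Fin n => ((s.val : ℕ) : ZMod n)) := by
  rw [Fintype.bijective_iff_injective_and_card]
  constructor
  · intro s t h
    simp only at h
    have h2 := congrArg ZMod.val h
    rw [ZMod.val_cast_of_lt s.isLt, ZMod.val_cast_of_lt t.isLt] at h2
    exact Fin.ext h2
  · simp [ZMod.card]

/-- Row sum: sum of a sum-zero function over an affine image of `Fin n` with unit slope. -/
lemma rowSum (n m : ℕ) [NeZero n] (hcop : Nat.Coprime m n)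
    (G : ZMod n → ℂ) (hG : ∑ i, G i = 0) (c : ZMod n) :
    ∑ s : Fin n, G (c - (m : ZMod n) * ((s.val : ℕ) : ZMod n)) = 0 := by
  have hu : IsUnit ((m : ℕ) : ZMod n) := (ZMod.unitOfCoprime m hcop).isUnit
  have hψ : Function.Bijective (fun x : ZMod n => c - (m : ZMod n) * x) := by
    refine Finite.injective_iff_bijective.mp ?_
    intro x y hxy
    simp only at hxy
    exact hu.mul_left_cancel (sub_right_injective hxy)
  have hφ : Function.Bijective
      (fun s : Fin n => c - (m : ZMod n) * ((s.val : ℕ) : ZMod n)) :=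
    hψ.comp (finToZMod_bij n)
  calc ∑ s : Fin n, G (c - (m : ZMod n) * ((s.val : ℕ) : ZMod n))
      = ∑ x : ZMod n, G x := Fintype.sum_bijective _ hφ _ _ (fun s => rfl)
    _ = 0 := hG

/-- Key summation lemma: summing a sum-zero `g` along the orbit of the double shift
over a full period `m*n` gives zero, by CRT (coprimality of `m` and `n`). -/
lemma sumA (n m : ℕ) [NeZero n] [NeZero m] (hcop : Nat.Coprime m n)
    (g : ZMod m → ZMod n → ℂ) (hg : ∀ a, ∑ i, g a i = 0) (a : ZMod m) (i : ZMod n) :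
    ∑ k ∈ Finset.range (m * n), g (a + (k : ℕ)) (i - (k : ℕ)) = 0 := by
  rw [Nat.mul_comm m n]
  rw [← Fin.sum_univ_eq_sum_range (fun k => g (a + (k : ℕ)) (i - (k : ℕ))) (n * m)]
  rw [← Equiv.sum_comp (finProdFinEquiv : Fin n × Fin m ≃ Fin (n * m))
      (fun k : Fin (n * m) => g (a + ((k : ℕ) : ZMod m)) (i - ((k : ℕ) : ZMod n)))]
  rw [Fintype.sum_prod_type]
  have key : ∀ s : Fin n, ∀ r : Fin m,
      g (a + (((finProdFinEquiv (s, r) : Fin (n*m)) : ℕ) : ZMod m))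
        (i - (((finProdFinEquiv (s, r) : Fin (n*m)) : ℕ) : ZMod n))
        = g (a + ((r.val : ℕ) : ZMod m))
            ((i - ((r.val : ℕ) : ZMod n)) - (m : ZMod n) * ((s.val : ℕ) : ZMod n)) := by
    intro s r
    have hv : ((finProdFinEquiv (s, r) : Fin (n*m)) : ℕ) = r.val + m * s.val := rfl
    rw [hv]
    congr 1
    · push_cast
      simp
    · push_cast
      ring
  simp only [key]
  rw [Finset.sum_comm]
  refine Finset.sum_eq_zero fun r _ => ?_
  exact rowSum n m hcop (g (a + ((r.val : ℕ) : ZMod m)))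
    (hg _) (i - ((r.val : ℕ) : ZMod n))

/-- The lattice-shifted sum of a sum-zero function over one fiber is zero. -/
lemma lemB (n : ℕ) [NeZero n] (G : ZMod n → ℂ) (hG : ∑ i, G i = 0) (k : ZMod n) :
    ∑ i : ZMod n, G (i - k) = 0 := by
  calc ∑ i : ZMod n, G (i - k) = ∑ i : ZMod n, G ((Equiv.subRight k) i) := rfl
    _ = ∑ i : ZMod n, G i := Equiv.sum_comp (Equiv.subRight k) G
    _ = 0 := hG

theorem aux (n m : ℕ) [NeZero n] [NeZero m] (hcop : Nat.Coprime m n)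
    (g : ZMod m → ZMod n → ℂ) (hg : ∀ a, ∑ i, g a i = 0) :
    ∃! f : ZMod m → ZMod n → ℂ,
      (∀ a, ∑ i, f a i = 0) ∧
      ∀ (a : ZMod m) (i : ZMod n), f a i - f (a + 1) (i - 1) = g a i := by
  have hNpos : 0 < m * n :=
    Nat.mul_pos (Nat.pos_of_ne_zero (NeZero.ne m)) (Nat.pos_of_ne_zero (NeZero.ne n))
  have hN : ((m * n : ℕ) : ℂ) ≠ 0 := Nat.cast_ne_zero.mpr hNpos.ne'
  let f : ZMod m → ZMod n → ℂ := fun a i =>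
    ((m * n : ℕ) : ℂ)⁻¹ * ∑ k ∈ Finset.range (m * n),
      ((m * n - 1 - k : ℕ) : ℂ) * g (a + (k : ℕ)) (i - (k : ℕ))
  have hf : ∀ a i, f a i = ((m * n : ℕ) : ℂ)⁻¹ * ∑ k ∈ Finset.range (m * n),
      ((m * n - 1 - k : ℕ) : ℂ) * g (a + (k : ℕ)) (i - (k : ℕ)) := fun _ _ => rfl
  -- property 1 : sums are zero
  have prop1 : ∀ a, ∑ i, f a i = 0 := by
    intro a
    have e1 : ∑ i : ZMod n, f a i = ((m * n : ℕ) : ℂ)⁻¹ * ∑ k ∈ Finset.range (m * n),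
        ((m * n - 1 - k : ℕ) : ℂ) * ∑ i : ZMod n, g (a + (k : ℕ)) (i - (k : ℕ)) := by
      simp only [hf]
      rw [← Finset.mul_sum]
      congr 1
      rw [Finset.sum_comm]
      exact Finset.sum_congr rfl fun k _ => (Finset.mul_sum _ _ _).symm
    rw [e1]
    have e2 : ∀ k ∈ Finset.range (m * n), ((m * n - 1 - k : ℕ) : ℂ) *
        ∑ i : ZMod n, g (a + (k : ℕ)) (i - (k : ℕ)) = 0 := by
      intro k _
      rw [lemB n (g (a + (k : ℕ))) (hg _) ((k : ℕ) : ZMod n), mul_zero]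
    rw [Finset.sum_congr rfl e2]
    simp
  -- main identity
  have prop2 : ∀ (a : ZMod m) (i : ZMod n), f a i - f (a + 1) (i - 1) = g a i := by
    intro a i
    let h : ℕ → ℂ := fun k => g (a + (k : ℕ)) (i - (k : ℕ))
    have hh : ∀ k, h k = g (a + (k : ℕ)) (i - (k : ℕ)) := fun _ => rfl
    let C : ℕ → ℂ := fun k => ((m * n - k : ℕ) : ℂ)
    have hC : ∀ k, C k = ((m * n - k : ℕ) : ℂ) := fun _ => rfl
    have c1 : ∀ k : ℕ, ((m * n - 1 - k : ℕ) : ℂ) = C (k + 1) := by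
      intro k
      rw [hC]
      congr 1
      omega
    have c2 : f a i = ((m * n : ℕ) : ℂ)⁻¹ * ∑ k ∈ Finset.range (m * n), C (k + 1) * h k := by
      rw [hf]
      congr 1
      exact Finset.sum_congr rfl fun k _ => by rw [c1, hh]
    have c3 : f (a + 1) (i - 1)
        = ((m * n : ℕ) : ℂ)⁻¹ * ∑ k ∈ Finset.range (m * n), C (k + 1) * h (k + 1) := by
      rw [hf]
      congr 1
      refine Finset.sum_congr rfl fun k _ => ?_
      rw [c1, hh]
      congr 2
      · push_cast; ring
      · push_cast; ring
    have c4 : ∑ k ∈ Finset.range (m * n), C (k + 1) * h k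
        - ∑ k ∈ Finset.range (m * n), C (k + 1) * h (k + 1) = ((m * n : ℕ) : ℂ) * h 0 := by
      rw [← Finset.sum_sub_distrib]
      have step : ∀ k ∈ Finset.range (m * n), C (k + 1) * h k - C (k + 1) * h (k + 1)
          = (C k * h k - C (k + 1) * h (k + 1)) - (C k - C (k + 1)) * h k := by
        intro k _
        ring
      rw [Finset.sum_congr rfl step, Finset.sum_sub_distrib, Finset.sum_range_sub'
        (fun k => C k * h k) (m * n)]
      have hC0 : C 0 = ((m * n : ℕ) : ℂ) := by rw [hC]; norm_num
      have hCN : C (m * n) = 0 := by rw [hC]; norm_num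
      have hstep2 : ∀ k ∈ Finset.range (m * n), (C k - C (k + 1)) * h k = h k := by
        intro k hk
        rw [Finset.mem_range] at hk
        have hCk : C k - C (k + 1) = 1 := by
          rw [hC, hC]
          have h1 : m * n - k = (m * n - (k + 1)) + 1 := by omega
          rw [h1]
          push_cast
          ring
        rw [hCk, one_mul]
      rw [Finset.sum_congr rfl hstep2]
      have hsum : ∑ k ∈ Finset.range (m * n), h k = 0 := sumA n m hcop g hg a i
      rw [hsum, hC0, hCN]
      ring
    have h0 : h 0 = g a i := by rw [hh]; norm_num
    rw [c2, c3, ← mul_sub, c4, ← h0]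
    exact inv_mul_cancel_left₀ hN _
  refine ⟨f, ⟨prop1, prop2⟩, ?_⟩
  rintro f' ⟨h1, h2⟩
  funext a i
  let d : ZMod m → ZMod n → ℂ := fun a i => f' a i - f a i
  have hd : ∀ a i, d a i = f' a i - f a i := fun _ _ => rfl
  have u1 : ∀ a, ∑ i, d a i = 0 := by
    intro a
    simp only [hd, Finset.sum_sub_distrib, h1 a, prop1 a, sub_zero]
  have u2 : ∀ (a : ZMod m) (i : ZMod n), d a i = d (a + 1) (i - 1) := by
    intro a i
    rw [hd, hd]
    linear_combination (h2 a i) - (prop2 a i)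
  have u3 : ∀ (k : ℕ) (a : ZMod m) (i : ZMod n), d a i = d (a + (k : ℕ)) (i - (k : ℕ)) := by
    intro k
    induction k with
    | zero => intro a i; norm_num
    | succ k ih =>
      intro a i
      have e1 : a + 1 + ((k : ℕ) : ZMod m) = a + (((k + 1 : ℕ)) : ZMod m) := by push_cast; ring
      have e2 : i - 1 - ((k : ℕ) : ZMod n) = i - (((k + 1 : ℕ)) : ZMod n) := by push_cast; ring
      rw [u2 a i, ih (a + 1) (i - 1), e1, e2]
  have u4 : ((m * n : ℕ) : ℂ) * d a i = 0 := by
    have hz : ∑ k ∈ Finset.range (m * n), d (a + (k : ℕ)) (i - (k : ℕ)) = 0 :=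
      sumA n m hcop d u1 a i
    calc ((m * n : ℕ) : ℂ) * d a i = ∑ _k ∈ Finset.range (m * n), d a i := by
          rw [Finset.sum_const, Finset.card_range, nsmul_eq_mul]
      _ = ∑ k ∈ Finset.range (m * n), d (a + (k : ℕ)) (i - (k : ℕ)) :=
          Finset.sum_congr rfl fun k _ => u3 k a i
      _ = 0 := hz
  have hd0 : d a i = 0 := by
    rcases mul_eq_zero.mp u4 with h | h
    · exact absurd h hN
    · exact h
  rw [hd] at hd0
  exact sub_eq_zero.mp hd0

/-- On the periodic lattice `Γ = ℤ/mℤ` with lattice length `m` coprime to the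
Coxeter number `h = n` of `sl(n)`, the operator `Id - θ` with `θ = R_s·τ`
(the cyclic shift `c` on the Cartan subalgebra
`V = {v ∈ ℂⁿ : Σ vᵢ = 0}`, composed with the lattice shift `a ↦ a+1`)
is a bijective linear endomorphism of the space of `V`-valued lattice functions:
for every `g` with values in `V` there is a unique `f` with values in `V` such
that `f(a) - c(f(a+1)) = g(a)` for all `a`, where `c(v)ᵢ = v_{i-1 (mod n)}`. -/
theorem lattice_coxeter_shift_invertible (n m : ℕ) (hn : 2 ≤ n) [NeZero n]
    (hm : 1 ≤ m) (hcop : Nat.Coprime m n) :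
    ∀ g : ZMod m → Fin n → ℂ, (∀ a, ∑ i, g a i = 0) →
      ∃! f : ZMod m → Fin n → ℂ,
        (∀ a, ∑ i, f a i = 0) ∧
        ∀ (a : ZMod m) (i : Fin n), f a i - f (a + 1) (i - 1) = g a i := by
  intro g hg
  haveI : NeZero m := ⟨by omega⟩
  obtain ⟨n', rfl⟩ : ∃ n', n = n' + 1 := ⟨n - 1, by omega⟩
  exact aux (n' + 1) m hcop g hg
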